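/- arXiv:1511.02904 — 2 statements merged into one kernel-verified Lean document; each statement's English description precedes it below -/
import Mathlib

section
/- Every convex n-partition with at least one empty region (non-proper partition) is a limit, in the metric d_μ, of a sequence of proper convex n-partitions. Consequently C(ℝ^d, ≤ n) is the closure of C(ℝ^d, n), i.e. a compactification of the space of proper n-partitions. -/
open MeasureTheory Filter

/-- A possibly non-proper convex `n`-partition of `ℝ^d`. -/
def IsConvexPartitionLE {d n : ℕ} (P : Fin n → Set (EuclideanSpace ℝ (Fin d))) : Prop :=
  (∀ i, IsOpen (P i)) ∧ (∀ i, Convex ℝ (P i)) ∧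
    Pairwise (Function.onFun Disjoint P) ∧ (⋃ i, closure (P i)) = Set.univ

/-- A proper convex `n`-partition of `ℝ^d` (all regions non-empty). -/
def IsConvexPartition {d n : ℕ} (P : Fin n → Set (EuclideanSpace ℝ (Fin d))) : Prop :=
  (∀ i, (P i).Nonempty) ∧ IsConvexPartitionLE P

set_option maxHeartbeats 2000000 in
/-- **`C(ℝ^d, ≤ n)` is the closure of `C(ℝ^d, n)`.**
For a finite positive continuous (atomless) measure `μ`, every non-proper convex
`n`-partition (one with an empty region) is a `d_μ`-limit of proper convex `n`-partitions;
consequently every element of `C(ℝ^d, ≤ n)` is such a limit, i.e. `C(ℝ^d, ≤ n)` is a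
compactification of the space of proper `n`-partitions. -/
theorem nonproper_limit_of_proper
    (d n : ℕ) (hd : 0 < d)
    (μ : Measure (EuclideanSpace ℝ (Fin d))) [IsFiniteMeasure μ] [NullSingletonClass μ]
    (hpos : ∀ U : Set (EuclideanSpace ℝ (Fin d)), IsOpen U → U.Nonempty → 0 < μ U) :
    (∀ P : Fin n → Set (EuclideanSpace ℝ (Fin d)),
      IsConvexPartitionLE P → (∃ i, P i = ∅) →
      ∃ Q : ℕ → Fin n → Set (EuclideanSpace ℝ (Fin d)),
        (∀ k, IsConvexPartition (Q k)) ∧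
        Tendsto (fun k => ∑ i, (μ (symmDiff (Q k i) (P i))).toReal)
          atTop (nhds 0)) ∧
    (∀ P : Fin n → Set (EuclideanSpace ℝ (Fin d)),
      IsConvexPartitionLE P →
      ∃ Q : ℕ → Fin n → Set (EuclideanSpace ℝ (Fin d)),
        (∀ k, IsConvexPartition (Q k)) ∧
        Tendsto (fun k => ∑ i, (μ (symmDiff (Q k i) (P i))).toReal)
          atTop (nhds 0)) := by
  classical
  have key : ∀ P : Fin n → Set (EuclideanSpace ℝ (Fin d)),
      IsConvexPartitionLE P → (∃ i, P i = ∅) →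
      ∃ Q : ℕ → Fin n → Set (EuclideanSpace ℝ (Fin d)),
        (∀ k, IsConvexPartition (Q k)) ∧
        Tendsto (fun k => ∑ i, (μ (symmDiff (Q k i) (P i))).toReal)
          atTop (nhds 0) := by
    intro P hP hPe
    obtain ⟨hPo, hPc, hPd, hPu⟩ := hP
    obtain ⟨i₁, hi₁⟩ := hPe
    -- a nonempty region exists
    have hne : ∃ i₀, (P i₀).Nonempty := by
      by_contra h
      push_neg at h
      have hu : (Set.univ : Set (EuclideanSpace ℝ (Fin d))) = ∅ := by
        rw [← hPu]
        simp [h]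
      exact (Set.univ_nonempty (α := EuclideanSpace ℝ (Fin d))).ne_empty hu
    obtain ⟨i₀, a, ha⟩ := hne
    have hi₀ : ¬ P i₀ = ∅ := fun h => (h ▸ ha : a ∈ (∅ : Set (EuclideanSpace ℝ (Fin d))))
    set C := P i₀ with hCdef
    have hCo : IsOpen C := hPo i₀
    have hCc : Convex ℝ C := hPc i₀
    set f : EuclideanSpace ℝ (Fin d) →L[ℝ] ℝ := EuclideanSpace.proj ⟨0, hd⟩ with hfdef
    set g : EuclideanSpace ℝ (Fin d) → ℝ := fun x => Real.arctan (f x) with hgdef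
    have hgcont : Continuous g := Real.continuous_arctan.comp f.continuous
    have hglt : ∀ x, g x < Real.pi/2 := fun x => Real.arctan_lt_pi_div_two _
    have hggt : ∀ x, -(Real.pi/2) < g x := fun x => Real.neg_pi_div_two_lt_arctan _
    set J : Set ℝ := g '' C with hJdef
    have hJne : g a ∈ J := ⟨a, ha, rfl⟩
    have hJbdd : BddAbove J := ⟨Real.pi/2, by rintro y ⟨x, -, rfl⟩; exact (hglt x).le⟩
    set σ := sSup J with hσdef
    have hle : ∀ x ∈ C, g x ≤ σ := fun x hx => le_csSup hJbdd ⟨x, hx, rfl⟩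
    have hσle : σ ≤ Real.pi/2 := csSup_le ⟨_, hJne⟩ (by rintro y ⟨x, -, rfl⟩; exact (hglt x).le)
    have hlt : ∀ x ∈ C, g x < σ := by
      intro x hx
      obtain ⟨ε, hε, hball⟩ := Metric.isOpen_iff.1 (hPo i₀) x hx
      have hx' : x + (ε/2) • EuclideanSpace.single (⟨0, hd⟩ : Fin d) (1:ℝ) ∈ C := by
        apply hball
        rw [Metric.mem_ball, dist_eq_norm, add_sub_cancel_left, norm_smul,
          EuclideanSpace.norm_single]
        simp only [norm_one, mul_one, Real.norm_eq_abs, abs_of_pos (by linarith : (0:ℝ) < ε/2)]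
        linarith
      have hfval : f (x + (ε/2) • EuclideanSpace.single (⟨0, hd⟩ : Fin d) (1:ℝ)) = f x + ε/2 := by
        simp [hfdef, PiLp.proj_apply, PiLp.add_apply, PiLp.smul_apply, EuclideanSpace.single_apply]
      have : g x < g (x + (ε/2) • EuclideanSpace.single (⟨0, hd⟩ : Fin d) (1:ℝ)) := by
        apply Real.arctan_strictMono
        rw [hfval]; linarith
      exact lt_of_lt_of_le this (hle _ hx')
    -- the empty-index bookkeeping
    set s : Finset (Fin n) := Finset.univ.filter (fun j => P j = ∅) with hsdef
    set m := s.card with hmdef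
    have hmem : ∀ {j : Fin n}, P j = ∅ → j ∈ s := fun h =>
      Finset.mem_filter.2 ⟨Finset.mem_univ _, h⟩
    have hm0 : 0 < m := Finset.card_pos.2 ⟨i₁, hmem hi₁⟩
    have hm0' : (0:ℝ) < (m:ℝ) := by exact_mod_cast hm0
    set e := s.orderIsoOfFin rfl with hedef
    set r : Fin n → ℕ := fun i => if h : P i = ∅ then ((e.symm ⟨i, hmem h⟩ : Fin m) : ℕ) else 0
      with hrdef
    have hrlt : ∀ i, P i = ∅ → r i < m := by
      intro i h
      rw [hrdef]
      simp only [dif_pos h]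
      exact (e.symm ⟨i, hmem h⟩).2
    have hrinj : ∀ i j, P i = ∅ → P j = ∅ → r i = r j → i = j := by
      intro i j hi hj hij
      rw [hrdef] at hij
      simp only [dif_pos hi, dif_pos hj] at hij
      have h2 : (⟨i, hmem hi⟩ : {x // x ∈ s}) = ⟨j, hmem hj⟩ :=
        e.symm.injective (Fin.val_injective hij)
      exact congrArg Subtype.val h2
    have hrsurj : ∀ q, q < m → ∃ j, P j = ∅ ∧ r j = q := by
      intro q hq
      refine ⟨(e ⟨q, hq⟩ : {x // x ∈ s}).1, (Finset.mem_filter.1 (e ⟨q, hq⟩).2).2, ?_⟩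
      rw [hrdef]
      simp only [dif_pos (Finset.mem_filter.1 (e ⟨q, hq⟩).2).2]
      have : (⟨(e ⟨q, hq⟩ : {x // x ∈ s}).1, hmem (Finset.mem_filter.1 (e ⟨q, hq⟩).2).2⟩ :
          {x // x ∈ s}) = e ⟨q, hq⟩ := Subtype.ext rfl
      rw [this, OrderIso.symm_apply_apply]
    clear_value f g C J σ s m e r
    clear hedef hrdef
    -- thresholds
    set T : ℕ → ℕ → ℝ := fun k q =>
      if q < m then σ - (σ - g a) * ((m:ℝ) - q)/((m:ℝ) * ((k:ℝ)+2)) else Real.pi/2 with hTdef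
    have hδ : 0 < σ - g a := sub_pos.2 (hlt a ha)
    have hTlt : ∀ k q, q < m → T k q < σ := by
      intro k q hq
      rw [hTdef]
      simp only [if_pos hq]
      have hq' : (q:ℝ) < (m:ℝ) := by exact_mod_cast hq
      have hk0 : (0:ℝ) ≤ (k:ℝ) := Nat.cast_nonneg k
      have hden : (0:ℝ) < (m:ℝ) * ((k:ℝ)+2) := mul_pos hm0' (by linarith)
      have : (0:ℝ) < (σ - g a) * ((m:ℝ) - q)/((m:ℝ) * ((k:ℝ)+2)) :=
        div_pos (mul_pos hδ (by linarith)) hden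
      linarith
    have hTgt : ∀ k q, q < m → g a < T k q := by
      intro k q hq
      rw [hTdef]
      simp only [if_pos hq]
      have hq0 : (0:ℝ) ≤ (q:ℝ) := Nat.cast_nonneg q
      have hk0 : (0:ℝ) ≤ (k:ℝ) := Nat.cast_nonneg k
      have hden : (0:ℝ) < (m:ℝ) * ((k:ℝ)+2) := mul_pos hm0' (by linarith)
      have hX : (σ - g a) * ((m:ℝ) - q)/((m:ℝ)*((k:ℝ)+2)) < σ - g a := by
        rw [div_lt_iff₀ hden]
        nlinarith [mul_pos hδ (mul_pos hm0' (by linarith : (0:ℝ) < (k:ℝ)+1)),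
          mul_nonneg hδ.le hq0]
      linarith
    have hTm : ∀ k, T k m = Real.pi/2 := by
      intro k; rw [hTdef]; simp
    have hTmono' : ∀ k q q', q ≤ q' → q' ≤ m → T k q ≤ T k q' := by
      intro k q q' hqq hq'm
      by_cases hq' : q' < m
      · have hq : q < m := lt_of_le_of_lt hqq hq'
        rw [hTdef]
        simp only [if_pos hq, if_pos hq']
        have hqc : (q:ℝ) ≤ (q':ℝ) := by exact_mod_cast hqq
        have hk0 : (0:ℝ) ≤ (k:ℝ) := Nat.cast_nonneg k
        have hq'c : (q':ℝ) < (m:ℝ) := by exact_mod_cast hq'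
        have hden : (0:ℝ) < (m:ℝ) * ((k:ℝ)+2) := mul_pos hm0' (by linarith)
        have : (σ - g a) * ((m:ℝ) - q')/((m:ℝ)*((k:ℝ)+2)) ≤
            (σ - g a) * ((m:ℝ) - q)/((m:ℝ)*((k:ℝ)+2)) := by
          rw [div_le_div_iff_of_pos_right hden]
          exact mul_le_mul_of_nonneg_left (by linarith) hδ.le
        linarith
      · have hq'e : q' = m := le_antisymm hq'm (not_lt.1 hq')
        rw [hq'e, hTm]
        by_cases hq : q < m
        · exact ((hTlt k q hq).trans_le hσle).le
        · have hqe : q = m := le_antisymm (hqq.trans hq'm) (not_lt.1 hq)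
          rw [hqe, hTm]
    have hTsm : ∀ k q, q < m → T k q < T k (q+1) := by
      intro k q hq
      by_cases hq1 : q + 1 < m
      · rw [hTdef]
        simp only [if_pos hq, if_pos hq1]
        have hk0 : (0:ℝ) ≤ (k:ℝ) := Nat.cast_nonneg k
        have hq'c : ((q:ℝ)+1) < (m:ℝ) := by exact_mod_cast hq1
        have hden : (0:ℝ) < (m:ℝ) * ((k:ℝ)+2) := mul_pos hm0' (by linarith)
        have hstep : (σ - g a) * ((m:ℝ) - ((q:ℝ)+1))/((m:ℝ)*((k:ℝ)+2)) <
            (σ - g a) * ((m:ℝ) - q)/((m:ℝ)*((k:ℝ)+2)) := by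
          rw [div_lt_div_iff_of_pos_right hden]
          exact mul_lt_mul_of_pos_left (by linarith) hδ
        have hcast : ((q+1 : ℕ):ℝ) = (q:ℝ)+1 := by push_cast; ring
        rw [hcast]
        linarith
      · have : q + 1 = m := le_antisymm (Nat.succ_le_of_lt hq) (not_lt.1 hq1)
        rw [this, hTm]
        exact (hTlt k q hq).trans_le hσle
    have hT0 : ∀ k, T k 0 = σ - (σ - g a)/((k:ℝ)+2) := by
      intro k
      rw [hTdef]
      simp only [if_pos hm0, Nat.cast_zero, sub_zero]
      have hk0 : (0:ℝ) ≤ (k:ℝ) := Nat.cast_nonneg k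
      rw [mul_comm ((m:ℝ)) (((k:ℝ))+2), mul_div_mul_right _ _ hm0'.ne']
    have hTk : ∀ k k', k ≤ k' → T k 0 ≤ T k' 0 := by
      intro k k' hkk
      rw [hT0, hT0]
      have h1 : (0:ℝ) < (k:ℝ) + 2 := by positivity
      have h2 : ((k:ℝ)+2) ≤ ((k':ℝ)+2) := by
        have : (k:ℝ) ≤ (k':ℝ) := by exact_mod_cast hkk
        linarith
      have h3 : (0:ℝ) < (k':ℝ) + 2 := by positivity
      have h4 : (σ - g a)/((k':ℝ)+2) ≤ (σ - g a)/((k:ℝ)+2) :=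
        div_le_div_of_nonneg_left hδ.le h1 h2
      linarith
    clear_value T
    have hIoo : ∀ k q, q < m → -(Real.pi/2) < T k q ∧ T k q < Real.pi/2 := by
      intro k q hq
      exact ⟨(hggt a).trans (hTgt k q hq), (hTlt k q hq).trans_le hσle⟩
    have hslab_ne : ∀ k q, q < m → ∃ x ∈ C, T k q < g x ∧ g x < T k (q+1) := by
      intro k q hq
      obtain ⟨u, hu, huq⟩ := exists_lt_of_lt_csSup ⟨_, hJne⟩
        (show T k q < sSup J by rw [← hσdef]; exact hTlt k q hq)
      rw [hJdef] at hu
      obtain ⟨z, hz, rfl⟩ := hu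
      have hmin : T k q < min (T k (q+1)) (g z) := lt_min (hTsm k q hq) huq
      have hv1 : T k q < (T k q + min (T k (q+1)) (g z))/2 := by linarith
      have hv2 : (T k q + min (T k (q+1)) (g z))/2 < min (T k (q+1)) (g z) := by linarith
      set v := (T k q + min (T k (q+1)) (g z))/2 with hvdef
      have hva : g a < v := (hTgt k q hq).trans hv1
      have hcont : ContinuousOn (fun t : ℝ => g (a + t • (z - a))) (Set.Icc 0 1) := by
        apply Continuous.continuousOn
        exact hgcont.comp (continuous_const.add (continuous_id.smul continuous_const))
      have haz : a + (1:ℝ) • (z - a) = z := by rw [one_smul]; abel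
      have hmemv : v ∈ Set.Icc ((fun t : ℝ => g (a + t • (z - a))) 0)
          ((fun t : ℝ => g (a + t • (z - a))) 1) := by
        simp only [zero_smul, add_zero, haz]
        exact ⟨hva.le, hv2.le.trans (min_le_right _ _)⟩
      obtain ⟨t, ht, hgt⟩ := intermediate_value_Icc zero_le_one hcont hmemv
      refine ⟨a + t • (z - a), hCc.add_smul_sub_mem ha hz ht, ?_, ?_⟩
      · rw [show g (a + t • (z - a)) = v from hgt]; exact hv1
      · rw [show g (a + t • (z - a)) = v from hgt]
        exact hv2.trans_le (min_le_left _ _)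
    have harctan : ∀ y, g y = Real.arctan (f y) := fun y => by rw [hgdef]
    have hclos : ∀ k q, q < m → ∀ x ∈ C, T k q ≤ g x → g x < T k (q+1) →
        x ∈ closure (C ∩ g ⁻¹' Set.Ioo (T k q) (T k (q+1))) := by
      intro k q hq x hx hx1 hx2
      obtain ⟨z, hz, hz1, hz2⟩ := hslab_ne k q hq
      have hseq : Tendsto (fun j : ℕ => x + (1/((j:ℝ)+1)) • (z - x)) atTop (nhds x) := by
        have h0 : Tendsto (fun j : ℕ => (1:ℝ)/((j:ℝ)+1)) atTop (nhds 0) :=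
          tendsto_one_div_add_atTop_nhds_zero_nat
        have := (h0.smul_const (z - x)).const_add x
        simpa using this
      refine mem_closure_of_tendsto hseq (Filter.Eventually.of_forall fun j => ?_)
      have hj0 : (0:ℝ) ≤ (j:ℝ) := Nat.cast_nonneg j
      have ht0 : (0:ℝ) < 1/((j:ℝ)+1) := by positivity
      have ht1 : 1/((j:ℝ)+1) ≤ 1 := by
        rw [div_le_one (by positivity)]
        linarith
      set t : ℝ := 1/((j:ℝ)+1) with htdef
      have hfw : f (x + t • (z - x)) = f x + t * (f z - f x) := by
        simp [map_add, _root_.map_smul, map_sub, smul_eq_mul]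
      have hIq := hIoo k q hq
      have hbx : Real.tan (T k q) ≤ f x := by
        rw [← Real.arctan_strictMono.le_iff_le, Real.arctan_tan hIq.1 hIq.2, ← harctan x]
        exact hx1
      have hbz : Real.tan (T k q) < f z := by
        rw [← Real.arctan_strictMono.lt_iff_lt, Real.arctan_tan hIq.1 hIq.2, ← harctan z]
        exact hz1
      refine ⟨hCc.add_smul_sub_mem hx hz ⟨ht0.le, ht1⟩, ?_, ?_⟩
      · have hfwgt : Real.tan (T k q) < f (x + t • (z - x)) := by
          rw [hfw]
          nlinarith [mul_pos ht0 (by linarith : (0:ℝ) < f z - Real.tan (T k q)),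
            mul_nonneg (by linarith : (0:ℝ) ≤ 1 - t)
              (by linarith : (0:ℝ) ≤ f x - Real.tan (T k q))]
        have h2 := Real.arctan_strictMono hfwgt
        rw [Real.arctan_tan hIq.1 hIq.2] at h2
        rw [harctan]
        exact h2
      · have hfmax : f (x + t • (z - x)) ≤ max (f x) (f z) := by
          rcases le_total (f x) (f z) with h | h
          · rw [max_eq_right h, hfw]
            nlinarith [mul_nonneg (by linarith : (0:ℝ) ≤ 1 - t)
              (by linarith : (0:ℝ) ≤ f z - f x)]
          · rw [max_eq_left h, hfw]
            nlinarith [mul_nonneg ht0.le (by linarith : (0:ℝ) ≤ f x - f z)]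
        have hgm : g (x + t • (z - x)) ≤ max (g x) (g z) := by
          rw [harctan, harctan x, harctan z, ← Real.arctan_strictMono.monotone.map_max]
          exact Real.arctan_strictMono.monotone hfmax
        exact lt_of_le_of_lt hgm (max_lt hx2 hz2)
    have hconv : ∀ S : Set ℝ, Convex ℝ S → Convex ℝ (g ⁻¹' S) := by
      intro S hS
      have h1 : Convex ℝ (Real.arctan ⁻¹' S) := by
        apply Set.OrdConnected.convex
        constructor
        intro y1 hy1 y2 hy2 w hw
        exact hS.ordConnected.out hy1 hy2
          ⟨Real.arctan_strictMono.monotone hw.1, Real.arctan_strictMono.monotone hw.2⟩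
      have h2 : g ⁻¹' S = f ⁻¹' (Real.arctan ⁻¹' S) := by
        ext y
        simp only [Set.mem_preimage, harctan y]
      rw [h2]
      exact h1.linear_preimage (f : EuclideanSpace ℝ (Fin d) →ₗ[ℝ] ℝ)
    -- the approximating partitions
    set Q : ℕ → Fin n → Set (EuclideanSpace ℝ (Fin d)) := fun k i =>
      if P i = ∅ then C ∩ g ⁻¹' Set.Ioo (T k (r i)) (T k (r i + 1))
      else if i = i₀ then C ∩ g ⁻¹' Set.Iio (T k 0) else P i with hQdef
    have hQempty : ∀ k i, P i = ∅ →
        Q k i = C ∩ g ⁻¹' Set.Ioo (T k (r i)) (T k (r i + 1)) := by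
      intro k i h
      rw [hQdef]
      simp only [if_pos h]
    have hQ0 : ∀ k, Q k i₀ = C ∩ g ⁻¹' Set.Iio (T k 0) := by
      intro k
      simp only [hQdef]
      rw [if_neg (show ¬ P i₀ = ∅ from fun hh => hi₀ (hCdef.trans hh))]
      simp
    have hQother : ∀ k i, ¬ P i = ∅ → i ≠ i₀ → Q k i = P i := by
      intro k i h h'
      rw [hQdef]
      simp only [if_neg h, if_neg h']
    clear_value Q
    have hQpart : ∀ k, IsConvexPartition (Q k) := by
      intro k
      refine ⟨?_, ?_, ?_, ?_, ?_⟩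
      · -- nonempty
        intro i
        by_cases h : P i = ∅
        · obtain ⟨x, hx, h1, h2⟩ := hslab_ne k (r i) (hrlt i h)
          exact ⟨x, by rw [hQempty k i h]; exact ⟨hx, h1, h2⟩⟩
        · by_cases h' : i = i₀
          · refine ⟨a, ?_⟩
            rw [h', hQ0]
            exact ⟨ha, hTgt k 0 hm0⟩
          · rw [hQother k i h h']
            exact Set.nonempty_iff_ne_empty.2 h
      · -- open
        intro i
        by_cases h : P i = ∅
        · rw [hQempty k i h]
          exact hCo.inter (isOpen_Ioo.preimage hgcont)
        · by_cases h' : i = i₀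
          · rw [h', hQ0]
            exact hCo.inter (isOpen_Iio.preimage hgcont)
          · rw [hQother k i h h']
            exact hPo i
      · -- convex
        intro i
        by_cases h : P i = ∅
        · rw [hQempty k i h]
          exact hCc.inter (hconv _ (convex_Ioo _ _))
        · by_cases h' : i = i₀
          · rw [h', hQ0]
            exact hCc.inter (hconv _ (convex_Iio _))
          · rw [hQother k i h h']
            exact hPc i
      · -- pairwise disjoint
        intro i j hij
        have key2 : ∀ i, P i = ∅ → ∀ x ∈ Q k i, T k 0 ≤ g x ∧ x ∈ C := by
          intro i h x hx
          rw [hQempty k i h] at hx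
          obtain ⟨hxC, hx1, hx2⟩ := hx
          exact ⟨(hTmono' k 0 (r i) (Nat.zero_le _) (hrlt i h).le).trans hx1.le, hxC⟩
        rw [Function.onFun, Set.disjoint_left]
        intro x hxi hxj
        by_cases hi : P i = ∅ <;> by_cases hj : P j = ∅
        · rw [hQempty k i hi] at hxi
          rw [hQempty k j hj] at hxj
          obtain ⟨-, hi1, hi2⟩ := hxi
          obtain ⟨-, hj1, hj2⟩ := hxj
          have hrne : r i ≠ r j := fun h => hij (hrinj i j hi hj h)
          rcases lt_or_gt_of_ne hrne with h | h
          · linarith [hTmono' k (r i + 1) (r j) h (hrlt j hj).le]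
          · linarith [hTmono' k (r j + 1) (r i) h (hrlt i hi).le]
        · have hxiC := key2 i hi x hxi
          by_cases hj' : j = i₀
          · rw [hj', hQ0] at hxj
            exact absurd hxiC.1 (not_le.2 hxj.2)
          · rw [hQother k j hj hj'] at hxj
            exact Set.disjoint_left.1 (hPd (show i₀ ≠ j from fun hh => hj' hh.symm))
              (hCdef ▸ hxiC.2) hxj
        · have hxjC := key2 j hj x hxj
          by_cases hi' : i = i₀
          · rw [hi', hQ0] at hxi
            exact absurd hxjC.1 (not_le.2 hxi.2)
          · rw [hQother k i hi hi'] at hxi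
            exact Set.disjoint_left.1 (hPd (show i ≠ i₀ from hi')) hxi (hCdef ▸ hxjC.2)
        · by_cases hi' : i = i₀
          · by_cases hj' : j = i₀
            · exact hij (hi'.trans hj'.symm)
            · rw [hi', hQ0] at hxi
              rw [hQother k j hj hj'] at hxj
              exact Set.disjoint_left.1 (hPd (show i₀ ≠ j from fun hh => hj' hh.symm))
                (hCdef ▸ hxi.1) hxj
          · rw [hQother k i hi hi'] at hxi
            by_cases hj' : j = i₀
            · rw [hj', hQ0] at hxj
              exact Set.disjoint_left.1 (hPd (show i ≠ i₀ from hi')) hxi (hCdef ▸ hxj.1)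
            · rw [hQother k j hj hj'] at hxj
              exact Set.disjoint_left.1 (hPd hij) hxi hxj
      · -- covering
        have hCsub : C ⊆ ⋃ i, closure (Q k i) := by
          intro y hy
          by_cases h0 : g y < T k 0
          · exact Set.mem_iUnion.2 ⟨i₀, subset_closure (by rw [hQ0]; exact ⟨hy, h0⟩)⟩
          · push_neg at h0
            have hFne : ((Finset.range m).filter (fun q => T k q ≤ g y)).Nonempty :=
              ⟨0, Finset.mem_filter.2 ⟨Finset.mem_range.2 hm0, h0⟩⟩
            set q := ((Finset.range m).filter (fun q => T k q ≤ g y)).max' hFne with hqdef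
            have hqF := ((Finset.range m).filter (fun q => T k q ≤ g y)).max'_mem hFne
            rw [← hqdef] at hqF
            have hqm : q < m := Finset.mem_range.1 (Finset.mem_filter.1 hqF).1
            have hq1 : T k q ≤ g y := (Finset.mem_filter.1 hqF).2
            have hq2 : g y < T k (q+1) := by
              by_cases hc : q + 1 < m
              · by_contra hcon
                push_neg at hcon
                have hqF1 : q + 1 ∈ (Finset.range m).filter (fun q => T k q ≤ g y) :=
                  Finset.mem_filter.2 ⟨Finset.mem_range.2 hc, hcon⟩
                have := Finset.le_max' _ _ hqF1
                omega
              · have hce : q + 1 = m := le_antisymm (Nat.succ_le_of_lt hqm) (not_lt.1 hc)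
                rw [hce, hTm]
                exact hglt y
            obtain ⟨j, hjE, hrj⟩ := hrsurj q hqm
            refine Set.mem_iUnion.2 ⟨j, ?_⟩
            rw [hQempty k j hjE, hrj]
            exact hclos k q hqm y hy hq1 hq2
        have hclosed : IsClosed (⋃ i, closure (Q k i)) :=
          isClosed_iUnion_of_finite fun i => isClosed_closure
        apply Set.eq_univ_of_univ_subset
        rw [← hPu]
        refine Set.iUnion_subset fun i => ?_
        by_cases h : P i = ∅
        · rw [h]
          simp
        · by_cases h' : i = i₀
          · rw [h', ← hCdef]
            exact hclosed.closure_subset_iff.2 hCsub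
          · rw [← hQother k i h h']
            exact Set.subset_iUnion (fun i => closure (Q k i)) i
    -- convergence
    set A : ℕ → Set (EuclideanSpace ℝ (Fin d)) := fun k => C ∩ g ⁻¹' Set.Ici (T k 0) with hAdef
    have hAmeas : ∀ k, NullMeasurableSet (A k) μ := fun k =>
      (hCo.measurableSet.inter (hgcont.measurable measurableSet_Ici)).nullMeasurableSet
    have hAanti : Antitone A := by
      intro k k' hkk x hx
      rw [hAdef] at hx ⊢
      exact ⟨hx.1, le_trans (hTk k k' hkk) hx.2⟩
    have hAempty : ⋂ k, A k = ∅ := by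
      apply Set.eq_empty_iff_forall_notMem.2
      intro x hx
      have hx' : ∀ k, x ∈ A k := Set.mem_iInter.1 hx
      have hxC : x ∈ C := (hx' 0).1
      have hxσ : g x < σ := hlt x hxC
      obtain ⟨k, hk⟩ := exists_nat_gt ((σ - g a)/(σ - g x))
      have hgx : T k 0 ≤ g x := (hx' k).2
      rw [hT0] at hgx
      have h1 : (0:ℝ) < σ - g x := by linarith
      have h2 : (0:ℝ) < (k:ℝ) + 2 := by positivity
      have hk0 : (0:ℝ) ≤ (k:ℝ) := Nat.cast_nonneg k
      have h3 : (σ - g a)/((k:ℝ)+2) < σ - g x := by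
        rw [div_lt_iff₀ h2]
        have h4 := (div_lt_iff₀ h1).1 hk
        nlinarith
      linarith
    have htend : Tendsto (fun k => μ (A k)) atTop (nhds 0) := by
      have h5 := tendsto_measure_iInter_atTop hAmeas hAanti ⟨0, measure_ne_top μ _⟩
      rw [hAempty] at h5
      simpa [Function.comp_def] using h5
    have hQA : ∀ k i, symmDiff (Q k i) (P i) ⊆ A k := by
      intro k i
      by_cases h : P i = ∅
      · rw [h]
        have hsd : symmDiff (Q k i) (∅ : Set (EuclideanSpace ℝ (Fin d))) = Q k i := by
          simp [symmDiff_def]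
        rw [hsd, hQempty k i h, hAdef]
        intro x hx
        obtain ⟨hxC, hx1, hx2⟩ := hx
        exact ⟨hxC, ((hTmono' k 0 (r i) (Nat.zero_le _) (hrlt i h).le).trans hx1.le)⟩
      · by_cases h' : i = i₀
        · rw [h', hQ0, ← hCdef, hAdef]
          intro x hx
          rw [Set.mem_symmDiff] at hx
          rcases hx with ⟨hx1, hx2⟩ | ⟨hx1, hx2⟩
          · exact absurd hx1.1 hx2
          · have h6 : ¬ g x < T k 0 := fun hc => hx2 ⟨hx1, hc⟩
            exact ⟨hx1, not_lt.1 h6⟩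
        · rw [hQother k i h h', symmDiff_self]
          exact Set.empty_subset _
    refine ⟨Q, hQpart, ?_⟩
    have hbound : ∀ k, ∑ i, (μ (symmDiff (Q k i) (P i))).toReal ≤ (n:ℝ) * (μ (A k)).toReal := by
      intro k
      calc ∑ i, (μ (symmDiff (Q k i) (P i))).toReal
          ≤ ∑ _i : Fin n, (μ (A k)).toReal :=
            Finset.sum_le_sum fun i _ =>
              ENNReal.toReal_mono (measure_ne_top μ _) (measure_mono (hQA k i))
        _ = (n:ℝ) * (μ (A k)).toReal := by
            rw [Finset.sum_const, Finset.card_univ, Fintype.card_fin, nsmul_eq_mul]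
    have htoreal : Tendsto (fun k => (μ (A k)).toReal) atTop (nhds 0) := by
      have h7 := (ENNReal.tendsto_toReal (by simp : (0:ENNReal) ≠ ⊤)).comp htend
      simpa [Function.comp_def] using h7
    refine squeeze_zero (fun k => Finset.sum_nonneg fun i _ => ENNReal.toReal_nonneg)
      hbound ?_
    have h8 := htoreal.const_mul (n:ℝ)
    simpa using h8
  refine ⟨key, fun P hP => ?_⟩
  by_cases h : ∃ i, P i = ∅
  · exact key P hP h
  · push_neg at h
    refine ⟨fun _ => P, fun k => ⟨fun i => h i, hP⟩, ?_⟩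
    have : (fun k : ℕ => ∑ i, (μ (symmDiff (P i) (P i))).toReal) = fun _ => 0 := by
      funext k
      simp [symmDiff_self]
    rw [this]
    exact tendsto_const_nhds
end

section
/- The space C(ℝ^d, ≤ 2) of possibly non-proper convex 2-partitions of ℝ^d is homeomorphic to the sphere S^d, and the subspace C(ℝ^d, 2) of proper 2-partitions is obtained by removing two points; in particular C(ℝ^d, 2) is homotopy equivalent to S^{d−1}. -/
open MeasureTheory
open scoped RealInnerProductSpace

open Set Filter Topology

namespace TwoPartAux
noncomputable section
variable {d : ℕ}
abbrev E (d : ℕ) := EuclideanSpace ℝ (Fin d)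

def tail (c : E (d + 1)) : E d := WithLp.toLp 2 (fun i => c i.succ)
lemma tail_apply (c : E (d+1)) (i : Fin d) : tail c i = c i.succ := rfl
lemma tail_add (c c' : E (d+1)) : tail (c + c') = tail c + tail c' := by ext i; rfl
lemma tail_smul (r : ℝ) (c : E (d+1)) : tail (r • c) = r • tail c := by ext i; rfl

def g (c : E (d + 1)) (x : E d) : ℝ := c 0 + ⟪tail c, x⟫

def ext1 (x : E d) : E (d + 1) := WithLp.toLp 2 (Fin.cases 1 (fun i => x i) : Fin (d+1) → ℝ)
lemma ext1_zero (x : E d) : ext1 x 0 = 1 := rfl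
lemma ext1_succ (x : E d) (i : Fin d) : ext1 x i.succ = x i := by simp [ext1]

lemma g_eq_inner (c : E (d+1)) (x : E d) : g c x = ⟪c, ext1 x⟫ := by
  simp only [g, PiLp.inner_apply, RCLike.inner_apply, conj_trivial]
  rw [Fin.sum_univ_succ, ext1_zero, one_mul]
  simp [tail_apply, ext1_succ]

lemma norm_sq_succ (c : E (d+1)) : ‖c‖ ^ 2 = c 0 ^ 2 + ‖tail c‖ ^ 2 := by
  rw [← real_inner_self_eq_norm_sq, ← real_inner_self_eq_norm_sq]
  simp only [PiLp.inner_apply, RCLike.inner_apply, conj_trivial]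
  rw [Fin.sum_univ_succ]
  simp [tail_apply, sq]

def P (c : E (d + 1)) : Fin 2 → Set (E d) := ![{x | g c x < 0}, {x | 0 < g c x}]
lemma P_zero (c : E (d+1)) : P c 0 = {x | g c x < 0} := rfl
lemma P_one (c : E (d+1)) : P c 1 = {x | 0 < g c x} := rfl

lemma continuous_g_x (c : E (d+1)) : Continuous (g c) :=
  continuous_const.add (continuous_const.inner continuous_id)

lemma isOpen_P (c : E (d+1)) (i : Fin 2) : IsOpen (P c i) := by
  fin_cases i
  · exact isOpen_lt (continuous_g_x c) continuous_const
  · exact isOpen_lt continuous_const (continuous_g_x c)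

lemma convex_P (c : E (d+1)) (i : Fin 2) : Convex ℝ (P c i) := by
  have hlin : IsLinearMap ℝ (fun x : E d => ⟪tail c, x⟫) :=
    ⟨fun x y => inner_add_right _ _ _, fun r x => real_inner_smul_right _ _ _⟩
  fin_cases i
  · have : P c 0 = {x : E d | (fun x => ⟪tail c, x⟫) x < -c 0} := by
      ext x; simp only [P_zero, g, mem_setOf_eq]; constructor <;> intro h <;> linarith
    rw [show (P c ⟨0, by norm_num⟩) = P c 0 from rfl, this]
    exact convex_halfSpace_lt hlin _
  · have : P c 1 = {x : E d | -c 0 < (fun x => ⟪tail c, x⟫) x} := by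
      ext x; simp only [P_one, g, mem_setOf_eq]; constructor <;> intro h <;> linarith
    rw [show (P c ⟨1, by norm_num⟩) = P c 1 from rfl, this]
    exact convex_halfSpace_gt hlin _

lemma g_add_smul (c : E (d+1)) (x : E d) (r : ℝ) :
    g c (x + r • tail c) = g c x + r * ‖tail c‖ ^ 2 := by
  simp only [g, inner_add_right, real_inner_smul_right, real_inner_self_eq_norm_sq]
  ring

lemma g_zero_mem_closure (c : E (d+1)) (hc : tail c ≠ 0) {x : E d} (hx : g c x = 0) :
    x ∈ closure (P c 0) ∧ x ∈ closure (P c 1) := by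
  have ha : (0:ℝ) < ‖tail c‖ := norm_pos_iff.2 hc
  have key : ∀ ε > (0:ℝ), ∀ s : ℝ, (s = -1 ∨ s = 1) →
      dist x (x + (s * (ε / (2 * ‖tail c‖))) • tail c) < ε := by
    intro ε hε s hs
    rw [dist_eq_norm, sub_add_cancel_left, norm_neg, norm_smul, Real.norm_eq_abs]
    have habs : |s * (ε / (2 * ‖tail c‖))| = ε / (2 * ‖tail c‖) := by
      rcases hs with h | h <;> rw [h] <;>
        simp [abs_of_pos, abs_of_nonneg (le_of_lt (by positivity : (0:ℝ) < ε / (2 * ‖tail c‖)))]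
    rw [habs, div_mul_eq_mul_div]
    rw [div_lt_iff₀ (by positivity)]
    nlinarith
  constructor
  · rw [Metric.mem_closure_iff]
    intro ε hε
    refine ⟨x + ((-1) * (ε / (2 * ‖tail c‖))) • tail c, ?_, key ε hε _ (Or.inl rfl)⟩
    show g c _ < 0
    rw [g_add_smul, hx]
    have : (0:ℝ) < ε / (2 * ‖tail c‖) * ‖tail c‖ ^ 2 := by positivity
    nlinarith
  · rw [Metric.mem_closure_iff]
    intro ε hε
    refine ⟨x + (1 * (ε / (2 * ‖tail c‖))) • tail c, ?_, key ε hε _ (Or.inr rfl)⟩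
    show 0 < g c _
    rw [g_add_smul, hx]
    have : (0:ℝ) < ε / (2 * ‖tail c‖) * ‖tail c‖ ^ 2 := by positivity
    nlinarith

lemma tail_eq_zero_cases {c : E (d+1)} (hc : ‖c‖ = 1) (h : tail c = 0) :
    c 0 = 1 ∨ c 0 = -1 := by
  have h2 : c 0 ^ 2 = 1 := by
    have := norm_sq_succ c
    rw [hc, h] at this
    simpa using this.symm
  have : (c 0 - 1) * (c 0 + 1) = 0 := by nlinarith
  rcases mul_eq_zero.1 this with h' | h'
  · left; linarith
  · right; linarith

lemma union_closure_P {c : E (d+1)} (hc : ‖c‖ = 1) :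
    (⋃ i, closure (P c i)) = Set.univ := by
  ext x
  simp only [mem_iUnion, mem_univ, iff_true]
  by_cases ht : tail c = 0
  · rcases tail_eq_zero_cases hc ht with h | h
    · refine ⟨1, subset_closure ?_⟩
      show (0:ℝ) < g c x
      simp [g, ht, h]
    · refine ⟨0, subset_closure ?_⟩
      show g c x < 0
      simp [g, ht, h]
  · rcases lt_trichotomy (g c x) 0 with h | h | h
    · exact ⟨0, subset_closure h⟩
    · exact ⟨0, (g_zero_mem_closure c ht h).1⟩
    · exact ⟨1, subset_closure h⟩

lemma disjoint_P (c : E (d+1)) : Pairwise (Function.onFun Disjoint (P c)) := by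
  intro i j hij
  have key : Disjoint (P c 0) (P c 1) := by
    rw [Set.disjoint_left]
    intro x hx0 hx1
    have h0 : g c x < 0 := hx0
    have h1 : (0:ℝ) < g c x := hx1
    linarith
  fin_cases i <;> fin_cases j <;> simp_all [Function.onFun] <;> exact key.symm
lemma g_solve (c : E (d+1)) (hc : tail c ≠ 0) :
    g c ((-(c 0) / ‖tail c‖ ^ 2) • tail c) = 0 := by
  have ha : (0:ℝ) < ‖tail c‖ := norm_pos_iff.2 hc
  simp only [g, real_inner_smul_right, real_inner_self_eq_norm_sq]
  field_simp
  ring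

lemma tail_zero_of_sign_eq {c c' : E (d+1)} (hc : ‖c‖ = 1) (hc' : ‖c'‖ = 1)
    (h0 : ∀ x, g c x < 0 ↔ g c' x < 0) (h1 : ∀ x, 0 < g c x ↔ 0 < g c' x)
    (ht : tail c = 0) : tail c' = 0 ∧ c 0 = c' 0 := by
  have ht' : tail c' = 0 := by
    by_contra ht'
    have hzero := g_solve c' ht'
    rcases tail_eq_zero_cases hc ht with h | h
    · have : (0:ℝ) < g c ((-(c' 0) / ‖tail c'‖ ^ 2) • tail c') := by simp [g, ht, h]
      rw [h1 _, hzero] at this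
      exact lt_irrefl _ this
    · have : g c ((-(c' 0) / ‖tail c'‖ ^ 2) • tail c') < 0 := by simp [g, ht, h]
      rw [h0 _, hzero] at this
      exact lt_irrefl _ this
  refine ⟨ht', ?_⟩
  have e1 : g c 0 = c 0 := by simp [g, ht]
  have e2 : g c' 0 = c' 0 := by simp [g, ht']
  rcases tail_eq_zero_cases hc ht with h | h <;>
    rcases tail_eq_zero_cases hc' ht' with h' | h' <;> rw [h, h']
  · have := (h0 0).2; rw [e1, e2, h, h'] at this; norm_num at this
  · have := (h0 0).1; rw [e1, e2, h, h'] at this; norm_num at this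

lemma P_injective {c c' : E (d+1)} (hc : ‖c‖ = 1) (hc' : ‖c'‖ = 1) (h : P c = P c') :
    c = c' := by
  have h0 : ∀ x, g c x < 0 ↔ g c' x < 0 := by
    intro x
    have := congrFun h 0
    rw [Set.ext_iff] at this
    exact this x
  have h1 : ∀ x, 0 < g c x ↔ 0 < g c' x := by
    intro x
    have := congrFun h 1
    rw [Set.ext_iff] at this
    exact this x
  have hz : ∀ x, g c x = 0 → g c' x = 0 := by
    intro x hx
    rcases lt_trichotomy (g c' x) 0 with h' | h' | h'
    · rw [← h0] at h'; linarith
    · exact h'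
    · rw [← h1] at h'; linarith
  have ext_eq : c 0 = c' 0 → tail c = tail c' → c = c' := by
    intro hhead htail
    ext j
    refine Fin.cases ?_ (fun i => ?_) j
    · exact hhead
    · exact congrArg (fun v : E d => v i) htail
  by_cases ht : tail c = 0
  · obtain ⟨ht', hh⟩ := tail_zero_of_sign_eq hc hc' h0 h1 ht
    exact ext_eq hh (by rw [ht, ht'])
  by_cases ht' : tail c' = 0
  · obtain ⟨ht2, hh⟩ := tail_zero_of_sign_eq hc' hc (fun x => (h0 x).symm)
      (fun x => (h1 x).symm) ht'
    exact absurd ht2 ht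
  -- both tails nonzero
  set a : E d := tail c with ha_def
  set a' : E d := tail c' with ha'_def
  have hna : (0:ℝ) < ‖a‖ := norm_pos_iff.2 ht
  have hna' : (0:ℝ) < ‖a'‖ := norm_pos_iff.2 ht'
  set x₀ : E d := (-(c 0) / ‖a‖ ^ 2) • a with hx0_def
  have hx0 : g c x₀ = 0 := g_solve c ht
  have hx0' : g c' x₀ = 0 := hz _ hx0
  have hlin : ∀ v : E d, g c (x₀ + v) = ⟪a, v⟫ := by
    intro v
    simp only [g, inner_add_right] at hx0 ⊢
    rw [← ha_def] at hx0 ⊢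
    linarith
  have hlin' : ∀ v : E d, g c' (x₀ + v) = ⟪a', v⟫ := by
    intro v
    simp only [g, inner_add_right] at hx0' ⊢
    rw [← ha'_def] at hx0' ⊢
    linarith
  have hsign0 : ∀ v : E d, ⟪a, v⟫ < 0 ↔ ⟪a', v⟫ < 0 := by
    intro v; rw [← hlin v, ← hlin' v]; exact h0 _
  have hsign1 : ∀ v : E d, 0 < ⟪a, v⟫ ↔ 0 < ⟪a', v⟫ := by
    intro v; rw [← hlin v, ← hlin' v]; exact h1 _
  have hsignz : ∀ v : E d, ⟪a, v⟫ = 0 → ⟪a', v⟫ = 0 := by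
    intro v hv
    rcases lt_trichotomy (⟪a', v⟫ : ℝ) 0 with h' | h' | h'
    · rw [← hsign0] at h'; linarith
    · exact h'
    · rw [← hsign1] at h'; linarith
  set t : ℝ := ⟪a, a'⟫ with ht_def
  have htpos : 0 < t := by
    have h2 : (0:ℝ) < ⟪a, a⟫ := by
      rw [real_inner_self_eq_norm_sq]; positivity
    have := (hsign1 a).1 h2
    rwa [real_inner_comm] at this
  set s : ℝ := t / ‖a‖ ^ 2 with hs_def
  have hspos : 0 < s := by positivity
  have hw : a' = s • a := by
    have hst : s * ‖a‖ ^ 2 = t := by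
      rw [hs_def]; field_simp
    have h1' : ⟪a, a' - s • a⟫ = 0 := by
      rw [inner_sub_right, real_inner_smul_right, real_inner_self_eq_norm_sq, ← ht_def]
      linarith
    have h2' : ⟪a', a' - s • a⟫ = 0 := hsignz _ h1'
    have h3' : ⟪a' - s • a, a' - s • a⟫ = 0 := by
      rw [inner_sub_left, real_inner_smul_left, h2', h1']
      ring
    have := inner_self_eq_zero.1 h3'
    rw [sub_eq_zero] at this
    exact this
  have hhead : c' 0 = s * c 0 := by
    have e1 : c 0 + ⟪a, x₀⟫ = 0 := hx0
    have e2 : c' 0 + ⟪a', x₀⟫ = 0 := hx0'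
    rw [hw, real_inner_smul_left] at e2
    nlinarith [e1, e2]
  have hs1 : s = 1 := by
    have n1 : c 0 ^2 + ‖a‖^2 = 1 := by
      have h' := norm_sq_succ c; rw [hc, ← ha_def] at h'
      rw [← h']; norm_num
    have n2 : c' 0 ^2 + ‖a'‖^2 = 1 := by
      have h' := norm_sq_succ c'; rw [hc', ← ha'_def] at h'
      rw [← h']; norm_num
    have hna2 : ‖a'‖ = s * ‖a‖ := by
      rw [hw, norm_smul, Real.norm_eq_abs, abs_of_pos hspos]
    rw [hhead, hna2] at n2
    have hs2 : s ^ 2 * (c 0 ^2 + ‖a‖^2) = 1 := by nlinarith [n2]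
    rw [n1, mul_one] at hs2
    have hfac : (s - 1) * (s + 1) = 0 := by
      have he : (s - 1) * (s + 1) = s ^ 2 - 1 := by ring
      rw [he, hs2]; ring
    rcases mul_eq_zero.1 hfac with h' | h'
    · linarith
    · linarith
  refine ext_eq ?_ ?_
  · rw [hhead, hs1, one_mul]
  · rw [hw, hs1, one_smul]

lemma interior_closure_subset_of_open_convex {s : Set (E d)} (hs : Convex ℝ s) (ho : IsOpen s)
    (hne : s.Nonempty) : interior (closure s) ⊆ s := by
  obtain ⟨y, hy⟩ := hne
  intro x hx
  by_cases hxy : x = y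
  · rwa [hxy]
  have hyi : y ∈ interior s := by rw [ho.interior_eq]; exact hy
  obtain ⟨δ, hδ, hball⟩ := Metric.isOpen_iff.1 isOpen_interior x hx
  set ε : ℝ := δ / (2 * ‖x - y‖) with hε
  have hxy' : (0:ℝ) < ‖x - y‖ := by
    rw [norm_pos_iff, sub_ne_zero]; exact hxy
  have hεpos : 0 < ε := by positivity
  set z : E d := x + ε • (x - y) with hz
  have hzmem : z ∈ closure s := by
    have : dist z x < δ := by
      rw [dist_eq_norm, hz, add_sub_cancel_left, norm_smul, Real.norm_eq_abs,
        abs_of_pos hεpos, hε, div_mul_eq_mul_div, mul_comm]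
      rw [div_lt_iff₀ (by positivity)]
      nlinarith
    exact interior_subset (hball (Metric.mem_ball.2 this))
  have ht : ε / (1 + ε) ∈ Set.Ioc (0:ℝ) 1 := by
    constructor
    · positivity
    · rw [div_le_one (by positivity)]; linarith
  have hmem := hs.add_smul_sub_mem_interior' hzmem hyi ht
  have hxeq : z + (ε / (1 + ε)) • (y - z) = x := by
    have h1 : (1:ℝ) + ε ≠ 0 := by positivity
    have h2 : y - z = -(1 + ε) • (x - y) := by
      rw [hz]; module
    rw [h2, smul_smul, hz]
    have h3 : ε / (1 + ε) * -(1 + ε) = -ε := by field_simp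
    rw [h3]; module
  rw [hxeq] at hmem
  rwa [ho.interior_eq] at hmem

lemma iUnion_fin_two (s : Fin 2 → Set (E d)) : (⋃ i, s i) = s 0 ∪ s 1 := by
  ext x; simp [Fin.exists_fin_two]

def wvec (u : ℝ) (a : E d) : E (d + 1) := WithLp.toLp 2 (Fin.cases u (fun i => a i) : Fin (d+1) → ℝ)
lemma wvec_zero (u : ℝ) (a : E d) : wvec u a 0 = u := rfl
lemma tail_wvec (u : ℝ) (a : E d) : tail (wvec u a) = a := by
  ext i; simp [tail_apply, wvec]

lemma g_smul (r : ℝ) (c : E (d+1)) (x : E d) : g (r • c) x = r * g c x := by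
  simp only [g, tail_smul, real_inner_smul_left]
  have : (r • c) 0 = r * c 0 := rfl
  rw [this]; ring

lemma P_smul_pos {r : ℝ} (hr : 0 < r) (c : E (d+1)) : P (r • c) = P c := by
  funext i
  fin_cases i <;> ext x
  · show g (r • c) x < 0 ↔ g c x < 0
    rw [g_smul]
    constructor
    · intro h'; nlinarith
    · intro h'; nlinarith
  · show 0 < g (r • c) x ↔ 0 < g c x
    rw [g_smul]
    constructor
    · intro h'; nlinarith
    · intro h'; nlinarith

lemma P_surj (Q : Fin 2 → Set (E d))
    (hopen : ∀ i, IsOpen (Q i)) (hconv : ∀ i, Convex ℝ (Q i))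
    (hdisj : Pairwise (Function.onFun Disjoint Q))
    (hcover : (⋃ i, closure (Q i)) = Set.univ) :
    ∃ c : E (d+1), ‖c‖ = 1 ∧ P c = Q := by
  have hcover' : closure (Q 0) ∪ closure (Q 1) = Set.univ := by
    rw [← iUnion_fin_two (fun i => closure (Q i))]; exact hcover
  by_cases h0 : Q 0 = ∅
  · -- then Q 1 = univ
    have h1 : Q 1 = Set.univ := by
      have hcl : closure (Q 1) = Set.univ := by
        rw [h0] at hcover'; simpa using hcover'
      have hne : (Q 1).Nonempty := by
        by_contra hne
        rw [Set.not_nonempty_iff_eq_empty] at hne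
        rw [hne] at hcl
        simp at hcl
        exact (Set.univ_nonempty).ne_empty hcl.symm
      have := interior_closure_subset_of_open_convex (hconv 1) (hopen 1) hne
      rw [hcl, interior_univ] at this
      exact Set.eq_univ_of_univ_subset this
    refine ⟨EuclideanSpace.single 0 1, by simp [EuclideanSpace.norm_single], ?_⟩
    have htail : tail (EuclideanSpace.single (0 : Fin (d+1)) (1:ℝ)) = 0 := by
      ext i
      rw [tail_apply, EuclideanSpace.single_apply]
      simp [Fin.succ_ne_zero]
    have hg : ∀ x, g (EuclideanSpace.single (0 : Fin (d+1)) (1:ℝ)) x = 1 := by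
      intro x
      rw [g, htail, EuclideanSpace.single_apply]
      simp
    funext i
    fin_cases i
    · rw [show ((⟨0, by norm_num⟩ : Fin 2)) = 0 from rfl, P_zero, h0]
      ext x; simp [hg x]
    · rw [show ((⟨1, by norm_num⟩ : Fin 2)) = 1 from rfl, P_one, h1]
      ext x; simp [hg x]
  by_cases h1 : Q 1 = ∅
  · have h0' : Q 0 = Set.univ := by
      have hcl : closure (Q 0) = Set.univ := by
        rw [h1] at hcover'; simpa using hcover'
      have hne : (Q 0).Nonempty := by
        by_contra hne
        rw [Set.not_nonempty_iff_eq_empty] at hne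
        rw [hne] at hcl
        simp at hcl
        exact (Set.univ_nonempty).ne_empty hcl.symm
      have := interior_closure_subset_of_open_convex (hconv 0) (hopen 0) hne
      rw [hcl, interior_univ] at this
      exact Set.eq_univ_of_univ_subset this
    refine ⟨-EuclideanSpace.single 0 1, by simp [EuclideanSpace.norm_single], ?_⟩
    have htail : tail (-EuclideanSpace.single (0 : Fin (d+1)) (1:ℝ)) = 0 := by
      ext i
      show -(EuclideanSpace.single (0 : Fin (d+1)) (1:ℝ)) i.succ = 0
      rw [EuclideanSpace.single_apply]
      simp [Fin.succ_ne_zero]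
    have hg : ∀ x, g (-EuclideanSpace.single (0 : Fin (d+1)) (1:ℝ)) x = -1 := by
      intro x
      rw [g, htail]
      show -(EuclideanSpace.single (0 : Fin (d+1)) (1:ℝ)) 0 + ⟪(0 : E d), x⟫ = -1
      rw [EuclideanSpace.single_apply]
      simp
    funext i
    fin_cases i
    · rw [show ((⟨0, by norm_num⟩ : Fin 2)) = 0 from rfl, P_zero, h0']
      ext x; simp [hg x]
    · rw [show ((⟨1, by norm_num⟩ : Fin 2)) = 1 from rfl, P_one, h1]
      ext x; simp [hg x]
  -- both nonempty
  replace h0 : (Q 0).Nonempty := Set.nonempty_iff_ne_empty.2 h0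
  replace h1 : (Q 1).Nonempty := Set.nonempty_iff_ne_empty.2 h1
  obtain ⟨f, u, hf0, hf1⟩ := geometric_hahn_banach_open_open (hconv 0) (hopen 0) (hconv 1)
    (hopen 1) (hdisj (show (0 : Fin 2) ≠ 1 by decide))
  set a : E d := (InnerProductSpace.toDual ℝ (E d)).symm f with ha_def
  have ha_app : ∀ x, ⟪a, x⟫ = f x := fun x => InnerProductSpace.toDual_symm_apply
  have hane : a ≠ 0 := by
    intro hz
    obtain ⟨x0, hx0⟩ := h0
    obtain ⟨x1, hx1⟩ := h1
    have e0 : f x0 = 0 := by rw [← ha_app, hz, inner_zero_left]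
    have e1 : f x1 = 0 := by rw [← ha_app, hz, inner_zero_left]
    have := hf0 x0 hx0
    have := hf1 x1 hx1
    linarith
  have hQ0 : Q 0 = {x | f x < u} := by
    apply Set.Subset.antisymm (fun x hx => hf0 x hx)
    intro x (hx : f x < u)
    have hxcl : x ∈ closure (Q 0) := by
      have : x ∈ closure (Q 0) ∪ closure (Q 1) := by rw [hcover']; trivial
      rcases this with h | h
      · exact h
      · exfalso
        have : u ≤ f x := by
          have hsub : closure (Q 1) ⊆ {y | u ≤ f y} :=
            closure_minimal (fun y hy => le_of_lt (hf1 y hy))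
              (isClosed_le continuous_const f.continuous)
          exact hsub h
        linarith
    have hop : IsOpen {y : E d | f y < u} := isOpen_lt f.continuous continuous_const
    have : x ∈ interior (closure (Q 0)) := by
      apply interior_maximal ?_ hop hx
      intro y (hy : f y < u)
      have : y ∈ closure (Q 0) ∪ closure (Q 1) := by rw [hcover']; trivial
      rcases this with h | h
      · exact h
      · exfalso
        have hsub : closure (Q 1) ⊆ {z | u ≤ f z} :=
          closure_minimal (fun z hz => le_of_lt (hf1 z hz))
            (isClosed_le continuous_const f.continuous)
        have := hsub h
        exact absurd hy (not_lt.2 this)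
    exact interior_closure_subset_of_open_convex (hconv 0) (hopen 0) h0 this
  have hQ1 : Q 1 = {x | u < f x} := by
    apply Set.Subset.antisymm (fun x hx => hf1 x hx)
    intro x (hx : u < f x)
    have hop : IsOpen {y : E d | u < f y} := isOpen_lt continuous_const f.continuous
    have : x ∈ interior (closure (Q 1)) := by
      apply interior_maximal ?_ hop hx
      intro y (hy : u < f y)
      have : y ∈ closure (Q 0) ∪ closure (Q 1) := by rw [hcover']; trivial
      rcases this with h | h
      · exfalso
        have hsub : closure (Q 0) ⊆ {z | f z ≤ u} :=
          closure_minimal (fun z hz => le_of_lt (hf0 z hz))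
            (isClosed_le f.continuous continuous_const)
        have := hsub h
        exact absurd hy (not_lt.2 this)
      · exact h
    exact interior_closure_subset_of_open_convex (hconv 1) (hopen 1) h1 this
  -- normalize
  set w : E (d+1) := wvec (-u) a with hw_def
  have hwne : w ≠ 0 := by
    intro hz
    apply hane
    rw [← tail_wvec (-u) a, ← hw_def, hz]
    rfl
  have hwpos : (0:ℝ) < ‖w‖ := norm_pos_iff.2 hwne
  refine ⟨‖w‖⁻¹ • w, ?_, ?_⟩
  · rw [norm_smul, Real.norm_eq_abs, abs_of_pos (by positivity)]
    field_simp
  · rw [P_smul_pos (by positivity) w]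
    have hgw : ∀ x, g w x = f x - u := by
      intro x
      rw [g, hw_def, tail_wvec, wvec_zero, ha_app]
      ring
    funext i
    fin_cases i
    · rw [show ((⟨0, by norm_num⟩ : Fin 2)) = 0 from rfl, P_zero, hQ0]
      ext x
      simp only [mem_setOf_eq, hgw x]
      constructor <;> intro h <;> linarith
    · rw [show ((⟨1, by norm_num⟩ : Fin 2)) = 1 from rfl, P_one, hQ1]
      ext x
      simp only [mem_setOf_eq, hgw x]
      constructor <;> intro h <;> linarith

lemma measurable_P (c : E (d+1)) (i : Fin 2) : MeasurableSet (P c i) :=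
  (isOpen_P c i).measurableSet

lemma toReal_symmDiff_eq (μ : Measure (E d)) {A B : Set (E d)} (hA : MeasurableSet A)
    (hB : MeasurableSet B) :
    (μ (symmDiff A B)).toReal =
      ∫ x, |A.indicator (fun _ => (1:ℝ)) x - B.indicator (fun _ => (1:ℝ)) x| ∂μ := by
  have hpt : (fun x => |A.indicator (fun _ => (1:ℝ)) x - B.indicator (fun _ => (1:ℝ)) x|)
      = (symmDiff A B).indicator (fun _ => (1:ℝ)) := by
    funext x
    by_cases hxA : x ∈ A <;> by_cases hxB : x ∈ B <;>
      simp [Set.indicator_apply, Set.mem_symmDiff, hxA, hxB]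
  rw [hpt, integral_indicator_const (1:ℝ) (hA.symmDiff hB)]
  simp
  rfl

lemma continuous_g_c (x : E d) : Continuous (fun c : E (d+1) => g c x) := by
  have : (fun c : E (d+1) => g c x) = fun c => ⟪c, ext1 x⟫ := by
    funext c; exact g_eq_inner c x
  rw [this]
  exact continuous_id.inner continuous_const

lemma eventually_indicator_eq {c₀ : E (d+1)} {x : E d} (hx : g c₀ x ≠ 0) (i : Fin 2) :
    ∀ᶠ c in 𝓝 c₀, (P c i).indicator (fun _ => (1:ℝ)) x = (P c₀ i).indicator (fun _ => (1:ℝ)) x := by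
  have hcont := (continuous_g_c (d := d) x).tendsto c₀
  rcases lt_or_gt_of_ne hx with h | h
  · have hev : ∀ᶠ c in 𝓝 c₀, g c x < 0 := hcont.eventually_lt_const h
    filter_upwards [hev] with c hc
    fin_cases i
    · have h1 : x ∈ P c 0 := hc
      have h2 : x ∈ P c₀ 0 := h
      simp [Set.indicator_apply, h1, h2]
    · have h1 : x ∉ P c 1 := by
        intro hmem
        exact absurd (hmem : (0:ℝ) < g c x) (not_lt.2 (le_of_lt hc))
      have h2 : x ∉ P c₀ 1 := by
        intro hmem
        exact absurd (hmem : (0:ℝ) < g c₀ x) (not_lt.2 (le_of_lt h))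
      simp [Set.indicator_apply, h1, h2]
  · have hev : ∀ᶠ c in 𝓝 c₀, 0 < g c x := hcont.eventually_const_lt h
    filter_upwards [hev] with c hc
    fin_cases i
    · have h1 : x ∉ P c 0 := by
        intro hmem
        exact absurd (hmem : g c x < 0) (not_lt.2 (le_of_lt hc))
      have h2 : x ∉ P c₀ 0 := by
        intro hmem
        exact absurd (hmem : g c₀ x < 0) (not_lt.2 (le_of_lt h))
      simp [Set.indicator_apply, h1, h2]
    · have h1 : x ∈ P c 1 := hc
      have h2 : x ∈ P c₀ 1 := h
      simp [Set.indicator_apply, h1, h2]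

lemma ae_g_ne_zero (μ : Measure (E d))
    (hplane : ∀ (a : E d) (b : ℝ), a ≠ 0 → μ {x | ⟪a, x⟫ = b} = 0)
    {c₀ : E (d+1)} (hc₀ : ‖c₀‖ = 1) :
    ∀ᵐ x ∂μ, g c₀ x ≠ 0 := by
  by_cases ht : tail c₀ = 0
  · refine Filter.Eventually.of_forall fun x => ?_
    rw [g, ht, inner_zero_left, add_zero]
    rcases tail_eq_zero_cases hc₀ ht with h | h <;> rw [h] <;> norm_num
  · rw [MeasureTheory.ae_iff]
    have : {x : E d | ¬ g c₀ x ≠ 0} = {x | ⟪tail c₀, x⟫ = -(c₀ 0)} := by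
      ext x
      simp only [mem_setOf_eq, not_not, g]
      constructor <;> intro h <;> linarith
    rw [this]
    exact hplane _ _ ht

lemma tendsto_measure_P (μ : Measure (E d)) [IsFiniteMeasure μ]
    (hplane : ∀ (a : E d) (b : ℝ), a ≠ 0 → μ {x | ⟪a, x⟫ = b} = 0)
    (A : Set (E d)) (hA : MeasurableSet A) {c₀ : E (d+1)} (hc₀ : ‖c₀‖ = 1) (i : Fin 2) :
    Tendsto (fun c : E (d+1) => (μ (symmDiff A (P c i))).toReal) (𝓝 c₀)
      (𝓝 ((μ (symmDiff A (P c₀ i))).toReal)) := by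
  have hrepr : ∀ c : E (d+1), (μ (symmDiff A (P c i))).toReal =
      ∫ x, |A.indicator (fun _ => (1:ℝ)) x - (P c i).indicator (fun _ => (1:ℝ)) x| ∂μ :=
    fun c => toReal_symmDiff_eq μ hA (measurable_P c i)
  simp only [hrepr]
  apply MeasureTheory.tendsto_integral_filter_of_dominated_convergence
    (bound := fun _ => (1:ℝ))
  · refine Filter.Eventually.of_forall fun c => ?_
    apply Measurable.aestronglyMeasurable
    exact ((measurable_const.indicator hA).sub
      (measurable_const.indicator (measurable_P c i))).abs
  · refine Filter.Eventually.of_forall fun c => ?_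
    refine Filter.Eventually.of_forall fun x => ?_
    rw [Real.norm_eq_abs, abs_abs]
    by_cases hxA : x ∈ A <;> by_cases hxB : x ∈ P c i <;>
      simp [Set.indicator_apply, hxA, hxB]
  · exact MeasureTheory.integrable_const 1
  · filter_upwards [ae_g_ne_zero μ hplane hc₀] with x hx
    have hev := eventually_indicator_eq hx i
    apply Filter.Tendsto.congr' ?_ tendsto_const_nhds
    filter_upwards [hev] with c hc
    rw [hc]

lemma exists_open_subset_symmDiff {A B : Set (E d)}
    (hAo : IsOpen A) (hAc : Convex ℝ A) (hBo : IsOpen B) (hBc : Convex ℝ B)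
    {x : E d} (hx : x ∈ A \ B) :
    ∃ U : Set (E d), IsOpen U ∧ U.Nonempty ∧ U ⊆ symmDiff A B := by
  by_cases hB : B = ∅
  · refine ⟨A, hAo, ⟨x, hx.1⟩, ?_⟩
    rw [hB]
    intro y hy
    rw [Set.mem_symmDiff]
    exact Or.inl ⟨hy, by simp⟩
  have hBne : B.Nonempty := Set.nonempty_iff_ne_empty.2 hB
  by_cases hU : (A ∩ (closure B)ᶜ).Nonempty
  · refine ⟨A ∩ (closure B)ᶜ, hAo.inter (isClosed_closure.isOpen_compl), hU, ?_⟩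
    intro y hy
    rw [Set.mem_symmDiff]
    exact Or.inl ⟨hy.1, fun hmem => hy.2 (subset_closure hmem)⟩
  · exfalso
    rw [Set.not_nonempty_iff_eq_empty] at hU
    have hsub : A ⊆ closure B := by
      intro y hy
      by_contra hyc
      exact absurd (Set.eq_empty_iff_forall_notMem.1 hU y ⟨hy, hyc⟩) (fun h => h)
    have : A ⊆ B := by
      intro y hy
      exact interior_closure_subset_of_open_convex hBc hBo hBne
        (interior_maximal hsub hAo hy)
    exact hx.2 (this hx.1)

lemma sum_symmDiff_pos (μ : Measure (E d)) [IsFiniteMeasure μ]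
    (hpos : ∀ U : Set (E d), IsOpen U → U.Nonempty → 0 < μ U)
    {c c' : E (d+1)} (hc : ‖c‖ = 1) (hc' : ‖c'‖ = 1) (hne : c ≠ c') :
    0 < ∑ i, (μ (symmDiff (P c i) (P c' i))).toReal := by
  have hPne : P c ≠ P c' := fun h => hne (P_injective hc hc' h)
  have : ∃ i, P c i ≠ P c' i := by
    by_contra h
    push_neg at h
    exact hPne (funext h)
  obtain ⟨i, hi⟩ := this
  have hdiff : ∃ U : Set (E d), IsOpen U ∧ U.Nonempty ∧ U ⊆ symmDiff (P c i) (P c' i) := by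
    have hset : (∃ x, x ∈ P c i \ P c' i) ∨ (∃ x, x ∈ P c' i \ P c i) := by
      by_contra h
      push_neg at h
      apply hi
      apply Set.Subset.antisymm
      · intro y hy
        by_contra hyc
        exact (h.1 y) ⟨hy, hyc⟩
      · intro y hy
        by_contra hyc
        exact (h.2 y) ⟨hy, hyc⟩
    rcases hset with ⟨x, hx⟩ | ⟨x, hx⟩
    · exact exists_open_subset_symmDiff (isOpen_P c i) (convex_P c i)
        (isOpen_P c' i) (convex_P c' i) hx
    · obtain ⟨U, h1, h2, h3⟩ := exists_open_subset_symmDiff (isOpen_P c' i) (convex_P c' i)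
        (isOpen_P c i) (convex_P c i) hx
      exact ⟨U, h1, h2, by rwa [symmDiff_comm]⟩
  obtain ⟨U, hUo, hUne, hUsub⟩ := hdiff
  have hμU : 0 < μ (symmDiff (P c i) (P c' i)) :=
    lt_of_lt_of_le (hpos U hUo hUne) (measure_mono hUsub)
  have hpos_i : 0 < (μ (symmDiff (P c i) (P c' i))).toReal :=
    ENNReal.toReal_pos (ne_of_gt hμU) (measure_ne_top μ _)
  refine Finset.sum_pos' (fun j _ => ENNReal.toReal_nonneg) ⟨i, Finset.mem_univ i, ?_⟩
  exact hpos_i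

-- ### the two special points and properness

def unitc (d : ℕ) : E (d+1) := EuclideanSpace.single 0 1

lemma norm_unitc : ‖unitc d‖ = 1 := by simp [unitc, EuclideanSpace.norm_single]

lemma tail_unitc : tail (unitc d) = 0 := by
  ext i
  rw [tail_apply, unitc, EuclideanSpace.single_apply]
  simp [Fin.succ_ne_zero]

lemma unitc_zero_apply : unitc d 0 = 1 := by
  rw [unitc, EuclideanSpace.single_apply]; simp

lemma tail_neg (c : E (d+1)) : tail (-c) = -tail c := by ext i; rfl

lemma tail_eq_zero_iff {c : E (d+1)} (hc : ‖c‖ = 1) :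
    tail c = 0 ↔ c = unitc d ∨ c = -unitc d := by
  constructor
  · intro h
    rcases tail_eq_zero_cases hc h with h0 | h0
    · left
      ext j
      refine Fin.cases ?_ (fun i => ?_) j
      · rw [h0, unitc_zero_apply]
      · have := congrArg (fun v : E d => v i) h
        rw [tail_apply] at this
        rw [this]
        rw [unitc, EuclideanSpace.single_apply]
        simp [Fin.succ_ne_zero]
    · right
      ext j
      refine Fin.cases ?_ (fun i => ?_) j
      · show c 0 = -(unitc d 0)
        rw [h0, unitc_zero_apply]
      · have := congrArg (fun v : E d => v i) h
        rw [tail_apply] at this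
        show c i.succ = -(unitc d i.succ)
        rw [this, unitc, EuclideanSpace.single_apply]
        simp [Fin.succ_ne_zero]
  · rintro (rfl | rfl)
    · exact tail_unitc
    · rw [tail_neg, tail_unitc, neg_zero]

lemma g_smul_tail (c : E (d+1)) (r : ℝ) : g c (r • tail c) = c 0 + r * ‖tail c‖ ^ 2 := by
  have := g_add_smul c 0 r
  rw [zero_add] at this
  rw [this, g, inner_zero_right, add_zero]

lemma nonempty_P_iff {c : E (d+1)} (hc : ‖c‖ = 1) :
    (∀ i, (P c i).Nonempty) ↔ tail c ≠ 0 := by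
  constructor
  · intro h ht
    rcases tail_eq_zero_cases hc ht with h0 | h0
    · obtain ⟨x, hx⟩ := h 0
      have : g c x < 0 := hx
      rw [g, ht, inner_zero_left, add_zero, h0] at this
      linarith
    · obtain ⟨x, hx⟩ := h 1
      have : (0:ℝ) < g c x := hx
      rw [g, ht, inner_zero_left, add_zero, h0] at this
      linarith
  · intro ht i
    have ha : (0:ℝ) < ‖tail c‖ := norm_pos_iff.2 ht
    fin_cases i
    · refine ⟨((-(c 0) - 1) / ‖tail c‖ ^ 2) • tail c, ?_⟩
      show g c _ < 0
      rw [g_smul_tail]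
      rw [div_mul_cancel₀ _ (by positivity)]
      linarith
    · refine ⟨((1 - c 0) / ‖tail c‖ ^ 2) • tail c, ?_⟩
      show (0:ℝ) < g c _
      rw [g_smul_tail]
      rw [div_mul_cancel₀ _ (by positivity)]
      linarith

-- ### continuity of the structure maps

lemma continuous_tail : Continuous (tail : E (d+1) → E d) := by
  have h1 : Continuous fun (c : E (d+1)) (i : Fin d) => c i.succ :=
    continuous_pi fun i => (EuclideanSpace.proj (i.succ : Fin (d+1))).continuous
  exact (PiLp.continuous_toLp 2 (fun _ : Fin d => ℝ)).comp h1

def ext0 (x : E d) : E (d+1) := WithLp.toLp 2 (Fin.cases 0 (fun i => x i) : Fin (d+1) → ℝ)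

lemma ext0_zero (x : E d) : ext0 x 0 = 0 := rfl
lemma tail_ext0 (x : E d) : tail (ext0 x) = x := by
  ext i; simp [tail_apply, ext0]

lemma continuous_ext0 : Continuous (ext0 : E d → E (d+1)) := by
  have h1 : Continuous fun (b : E d) (j : Fin (d+1)) => ext0 b j := by
    refine continuous_pi fun j => ?_
    refine Fin.cases ?_ (fun i => ?_) j
    · simpa [ext0] using (continuous_const : Continuous fun _ : E d => (0:ℝ))
    · have : (fun b : E d => ext0 b i.succ) = fun b => b i := by
        funext b; simp [ext0]
      rw [this]
      exact (EuclideanSpace.proj i).continuous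
  exact (PiLp.continuous_toLp 2 (fun _ : Fin (d+1) => ℝ)).comp h1

lemma eq_of_sq_eq {a b : ℝ} (h : a ^ 2 = b ^ 2) (ha : 0 ≤ a) (hb : 0 ≤ b) : a = b := by
  have : (a - b) * (a + b) = 0 := by nlinarith
  rcases mul_eq_zero.1 this with h' | h' <;> linarith

lemma norm_ext0 (x : E d) : ‖ext0 x‖ = ‖x‖ := by
  have h := norm_sq_succ (ext0 x)
  rw [ext0_zero, tail_ext0] at h
  have : ‖ext0 x‖ ^ 2 = ‖x‖ ^ 2 := by rw [h]; ring
  exact eq_of_sq_eq this (norm_nonneg _) (norm_nonneg _)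

-- ### the homotopy equivalence

def C1 (d : ℕ) : ↥(Metric.sphere (0 : E (d+1)) 1) :=
  ⟨unitc d, by rw [mem_sphere_zero_iff_norm]; exact norm_unitc⟩

def C2 (d : ℕ) : ↥(Metric.sphere (0 : E (d+1)) 1) :=
  ⟨-unitc d, by rw [mem_sphere_zero_iff_norm, norm_neg]; exact norm_unitc⟩

lemma C1_ne_C2 : C1 d ≠ C2 d := by
  intro h
  have := congrArg (fun c : ↥(Metric.sphere (0 : E (d+1)) 1) => (c : E (d+1)) 0) h
  simp only [C1, C2] at this
  have h2 : (-unitc d) 0 = -(unitc d 0) := rfl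
  rw [h2, unitc_zero_apply] at this
  norm_num at this

lemma ne_C_of_tail_ne {w : E (d+1)} (hw : w ∈ Metric.sphere (0 : E (d+1)) 1)
    (ht : tail w ≠ 0) :
    (⟨w, hw⟩ : ↥(Metric.sphere (0 : E (d+1)) 1)) ≠ C1 d ∧
    (⟨w, hw⟩ : ↥(Metric.sphere (0 : E (d+1)) 1)) ≠ C2 d := by
  constructor
  · intro h
    apply ht
    have : w = unitc d := congrArg Subtype.val h
    rw [this]; exact tail_unitc
  · intro h
    apply ht
    have : w = -unitc d := congrArg Subtype.val h
    rw [this, tail_neg, tail_unitc, neg_zero]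

lemma tail_ne_of_ne_C {c : ↥(Metric.sphere (0 : E (d+1)) 1)} (h1 : c ≠ C1 d) (h2 : c ≠ C2 d) :
    tail (c : E (d+1)) ≠ 0 := by
  intro h
  have hc : ‖(c : E (d+1))‖ = 1 := mem_sphere_zero_iff_norm.1 c.2
  rcases (tail_eq_zero_iff hc).1 h with h' | h'
  · exact h1 (Subtype.ext h')
  · exact h2 (Subtype.ext h')

lemma homotopyEquiv_aux (d : ℕ) :
    Nonempty (ContinuousMap.HomotopyEquiv
      {c : ↥(Metric.sphere (0 : E (d+1)) 1) // c ≠ C1 d ∧ c ≠ C2 d}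
      (Metric.sphere (0 : E d) 1)) := by
  set S1 := Metric.sphere (0 : E (d+1)) 1
  set S0 := Metric.sphere (0 : E d) 1
  set X := {c : ↥S1 // c ≠ C1 d ∧ c ≠ C2 d}
  have htne : ∀ c : X, tail ((c : ↥S1) : E (d+1)) ≠ 0 := fun c =>
    tail_ne_of_ne_C c.2.1 c.2.2
  have hcnorm : ∀ c : X, ‖((c : ↥S1) : E (d+1))‖ = 1 := fun c =>
    mem_sphere_zero_iff_norm.1 (c : ↥S1).2
  -- the retraction map
  have hΦcont : Continuous fun c : X =>
      ‖tail ((c : ↥S1) : E (d+1))‖⁻¹ • tail ((c : ↥S1) : E (d+1)) := by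
    have htc : Continuous fun c : X => tail ((c : ↥S1) : E (d+1)) :=
      continuous_tail.comp (continuous_subtype_val.comp continuous_subtype_val)
    exact (htc.norm.inv₀ fun c => norm_ne_zero_iff.2 (htne c)).smul htc
  have hΦmem : ∀ c : X,
      ‖tail ((c : ↥S1) : E (d+1))‖⁻¹ • tail ((c : ↥S1) : E (d+1)) ∈ S0 := by
    intro c
    have h3 : (0:ℝ) < ‖tail ((c : ↥S1) : E (d+1))‖ := norm_pos_iff.2 (htne c)
    rw [mem_sphere_zero_iff_norm, norm_smul, Real.norm_eq_abs,
      abs_of_pos (by positivity : (0:ℝ) < ‖tail ((c : ↥S1) : E (d+1))‖⁻¹),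
      inv_mul_cancel₀ (ne_of_gt h3)]
  set Φ : C(X, ↥S0) := ⟨fun c => ⟨_, hΦmem c⟩, hΦcont.subtype_mk _⟩ with hΦ_def
  -- the inclusion map
  have hΨmem : ∀ b : ↥S0, ext0 ((b : E d)) ∈ S1 := by
    intro b
    rw [mem_sphere_zero_iff_norm, norm_ext0]
    exact mem_sphere_zero_iff_norm.1 b.2
  have hbne : ∀ b : ↥S0, (b : E d) ≠ 0 := by
    intro b hb
    have := mem_sphere_zero_iff_norm.1 b.2
    rw [hb] at this
    simp at this
  have hΨprop : ∀ b : ↥S0,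
      (⟨ext0 (b : E d), hΨmem b⟩ : ↥S1) ≠ C1 d ∧ (⟨ext0 (b : E d), hΨmem b⟩ : ↥S1) ≠ C2 d := by
    intro b
    exact ne_C_of_tail_ne (hΨmem b) (by rw [tail_ext0]; exact hbne b)
  set Ψ : C(↥S0, X) := ⟨fun b => ⟨⟨ext0 (b : E d), hΨmem b⟩, hΨprop b⟩,
    ((continuous_ext0.comp continuous_subtype_val).subtype_mk _).subtype_mk _⟩ with hΨ_def
  -- Φ ∘ Ψ = id
  have hΦΨ : Φ.comp Ψ = ContinuousMap.id ↥S0 := by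
    apply ContinuousMap.ext
    intro b
    apply Subtype.ext
    show ‖tail (ext0 (b : E d))‖⁻¹ • tail (ext0 (b : E d)) = (b : E d)
    rw [tail_ext0, mem_sphere_zero_iff_norm.1 b.2]
    simp
  -- the homotopy for Ψ ∘ Φ
  refine ⟨⟨Φ, Ψ, ?_, ?_⟩⟩
  · -- (Ψ.comp Φ).Homotopic (id X)
    -- auxiliary: vector field
    set v : ↑unitInterval × X → E (d+1) := fun p =>
      (p.1 : ℝ) • ((p.2 : ↥S1) : E (d+1)) +
        (1 - (p.1 : ℝ)) • ext0 (‖tail ((p.2 : ↥S1) : E (d+1))‖⁻¹ •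
          tail ((p.2 : ↥S1) : E (d+1))) with hv_def
    have hvtail : ∀ p : ↑unitInterval × X,
        tail (v p) = ((p.1 : ℝ) + (1 - (p.1 : ℝ)) * ‖tail ((p.2 : ↥S1) : E (d+1))‖⁻¹) •
          tail ((p.2 : ↥S1) : E (d+1)) := by
      intro p
      rw [hv_def]
      rw [tail_add, tail_smul, tail_smul, tail_ext0]
      rw [smul_smul, add_smul]
    have hcoef : ∀ p : ↑unitInterval × X,
        0 < (p.1 : ℝ) + (1 - (p.1 : ℝ)) * ‖tail ((p.2 : ↥S1) : E (d+1))‖⁻¹ := by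
      intro p
      have h1 : (0:ℝ) ≤ (p.1 : ℝ) := p.1.2.1
      have h2 : (p.1 : ℝ) ≤ 1 := p.1.2.2
      have h3 : (0:ℝ) < ‖tail ((p.2 : ↥S1) : E (d+1))‖⁻¹ :=
        inv_pos.2 (norm_pos_iff.2 (htne p.2))
      rcases eq_or_lt_of_le h1 with h | h
      · rw [← h]
        simpa using h3
      · nlinarith
    have hvne : ∀ p : ↑unitInterval × X, v p ≠ 0 := by
      intro p hp
      have := hvtail p
      rw [hp] at this
      have h0 : tail (0 : E (d+1)) = 0 := rfl
      rw [h0] at this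
      exact htne p.2 (by
        have := (smul_eq_zero.1 this.symm).resolve_left (ne_of_gt (hcoef p))
        exact this)
    have hvcont : Continuous v := by
      have ht : Continuous fun p : ↑unitInterval × X => (p.1 : ℝ) :=
        continuous_subtype_val.comp continuous_fst
      have hc : Continuous fun p : ↑unitInterval × X => ((p.2 : ↥S1) : E (d+1)) :=
        (continuous_subtype_val.comp continuous_subtype_val).comp continuous_snd
      have htl : Continuous fun p : ↑unitInterval × X => tail ((p.2 : ↥S1) : E (d+1)) :=
        continuous_tail.comp hc
      have hinv : Continuous fun p : ↑unitInterval × X =>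
          ‖tail ((p.2 : ↥S1) : E (d+1))‖⁻¹ :=
        htl.norm.inv₀ fun p => norm_ne_zero_iff.2 (htne p.2)
      exact (ht.smul hc).add ((continuous_const.sub ht).smul
        (continuous_ext0.comp (hinv.smul htl)))
    have hvnorm : ∀ p : ↑unitInterval × X, ‖‖v p‖⁻¹ • v p‖ = 1 := by
      intro p
      have : (0:ℝ) < ‖v p‖ := norm_pos_iff.2 (hvne p)
      rw [norm_smul, Real.norm_eq_abs, abs_of_pos (by positivity)]
      field_simp
    have hvmem : ∀ p : ↑unitInterval × X, ‖v p‖⁻¹ • v p ∈ S1 := fun p =>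
      mem_sphere_zero_iff_norm.2 (hvnorm p)
    have hvtailne : ∀ p : ↑unitInterval × X, tail (‖v p‖⁻¹ • v p) ≠ 0 := by
      intro p
      rw [tail_smul]
      have h1 : tail (v p) ≠ 0 := by
        rw [hvtail p]
        exact smul_ne_zero (ne_of_gt (hcoef p)) (htne p.2)
      have h2 : ‖v p‖⁻¹ ≠ 0 := by
        have : (0:ℝ) < ‖v p‖ := norm_pos_iff.2 (hvne p)
        positivity
      exact smul_ne_zero h2 h1
    refine ⟨⟨⟨fun p => ⟨⟨‖v p‖⁻¹ • v p, hvmem p⟩,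
      ne_C_of_tail_ne (hvmem p) (hvtailne p)⟩, ?_⟩, ?_, ?_⟩⟩
    · -- continuity
      have : Continuous fun p : ↑unitInterval × X => ‖v p‖⁻¹ • v p :=
        (hvcont.norm.inv₀ fun p => norm_ne_zero_iff.2 (hvne p)).smul hvcont
      exact (this.subtype_mk _).subtype_mk _
    · -- at 0 : Ψ ∘ Φ
      intro c
      apply Subtype.ext
      apply Subtype.ext
      show ‖v (0, c)‖⁻¹ • v (0, c) = ext0 (‖tail ((c : ↥S1) : E (d+1))‖⁻¹ •
        tail ((c : ↥S1) : E (d+1)))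
      have hv0 : v (0, c) = ext0 (‖tail ((c : ↥S1) : E (d+1))‖⁻¹ •
          tail ((c : ↥S1) : E (d+1))) := by
        rw [hv_def]
        show (((0 : ↑unitInterval) : ℝ)) • _ + (1 - ((0 : ↑unitInterval) : ℝ)) • _ = _
        rw [Set.Icc.coe_zero, zero_smul, sub_zero, one_smul, zero_add]
      rw [hv0, norm_ext0, norm_smul, Real.norm_eq_abs]
      have h3 : (0:ℝ) < ‖tail ((c : ↥S1) : E (d+1))‖ := norm_pos_iff.2 (htne c)
      rw [abs_of_pos (by positivity), inv_mul_cancel₀ (by positivity), inv_one, one_smul]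
    · -- at 1 : id
      intro c
      apply Subtype.ext
      apply Subtype.ext
      show ‖v (1, c)‖⁻¹ • v (1, c) = ((c : ↥S1) : E (d+1))
      have hv1 : v (1, c) = ((c : ↥S1) : E (d+1)) := by
        rw [hv_def]
        show (((1 : ↑unitInterval) : ℝ)) • _ + (1 - ((1 : ↑unitInterval) : ℝ)) • _ = _
        rw [Set.Icc.coe_one, one_smul, sub_self, zero_smul, add_zero]
      rw [hv1, hcnorm c, inv_one, one_smul]
  · rw [hΦΨ]

end
end TwoPartAux

open TwoPartAux in
/-- **`C(ℝ^d, ≤ 2)` is homeomorphic to `S^d`, and `C(ℝ^d, 2)` is obtained by removing two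
points, hence is homotopy equivalent to `S^(d-1)`.** -/
theorem space_of_two_partitions
    (d : ℕ) (hd : 0 < d)
    (μ : Measure (EuclideanSpace ℝ (Fin d))) [IsFiniteMeasure μ]
    (hpos : ∀ U : Set (EuclideanSpace ℝ (Fin d)), IsOpen U → U.Nonempty → 0 < μ U)
    (hplane : ∀ (a : EuclideanSpace ℝ (Fin d)) (b : ℝ), a ≠ 0 →
      μ {x | ⟪a, x⟫ = b} = 0) :
    ∃ f : (Metric.sphere (0 : EuclideanSpace ℝ (Fin (d + 1))) 1) →
        (Fin 2 → Set (EuclideanSpace ℝ (Fin d))),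
      (∀ c, IsConvexPartitionLE (f c)) ∧
      (∀ P : Fin 2 → Set (EuclideanSpace ℝ (Fin d)),
        IsConvexPartitionLE P → ∃! c, f c = P) ∧
      (∀ c, ∀ ε : ℝ, 0 < ε → ∃ δ : ℝ, 0 < δ ∧ ∀ c', dist c c' < δ →
        ∑ i, (μ (symmDiff (f c i) (f c' i))).toReal < ε) ∧
      (∀ c, ∀ ε : ℝ, 0 < ε → ∃ δ : ℝ, 0 < δ ∧ ∀ c',
        ∑ i, (μ (symmDiff (f c i) (f c' i))).toReal < δ → dist c c' < ε) ∧
      ∃ c₁ c₂ : (Metric.sphere (0 : EuclideanSpace ℝ (Fin (d + 1))) 1),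
        c₁ ≠ c₂ ∧
        (∀ c, IsConvexPartition (f c) ↔ (c ≠ c₁ ∧ c ≠ c₂)) ∧
        Nonempty (ContinuousMap.HomotopyEquiv
          {c : (Metric.sphere (0 : EuclideanSpace ℝ (Fin (d + 1))) 1) // c ≠ c₁ ∧ c ≠ c₂}
          (Metric.sphere (0 : EuclideanSpace ℝ (Fin d)) 1)) := by
  classical
  set S1 := Metric.sphere (0 : EuclideanSpace ℝ (Fin (d + 1))) 1 with hS1
  have hnorm : ∀ c : ↥S1, ‖(c : EuclideanSpace ℝ (Fin (d+1)))‖ = 1 := fun c =>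
    mem_sphere_zero_iff_norm.1 c.2
  refine ⟨fun c => P (c : EuclideanSpace ℝ (Fin (d+1))), ?_, ?_, ?_, ?_, ?_⟩
  · -- each is a partition
    intro c
    exact ⟨isOpen_P _, convex_P _, disjoint_P _, union_closure_P (hnorm c)⟩
  · -- bijectivity
    intro Q hQ
    obtain ⟨hopen, hconv, hdisj, hcover⟩ := hQ
    obtain ⟨c0, hc0norm, hc0⟩ := P_surj Q hopen hconv hdisj hcover
    refine ⟨⟨c0, mem_sphere_zero_iff_norm.2 hc0norm⟩, hc0, ?_⟩
    intro y hy
    apply Subtype.ext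
    exact P_injective (hnorm y) hc0norm (hy.trans hc0.symm)
  · -- continuity
    intro c ε hε
    have htend : Filter.Tendsto
        (fun c' : ↥S1 => ∑ i, (μ (symmDiff (P (c : EuclideanSpace ℝ (Fin (d+1))) i)
          (P (c' : EuclideanSpace ℝ (Fin (d+1))) i))).toReal)
        (𝓝 c) (𝓝 0) := by
      have h0 : (0:ℝ) = ∑ i : Fin 2, (μ (symmDiff (P (c : EuclideanSpace ℝ (Fin (d+1))) i)
          (P (c : EuclideanSpace ℝ (Fin (d+1))) i))).toReal := by
        simp [symmDiff_self]
      rw [h0]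
      apply tendsto_finset_sum
      intro i _
      exact (tendsto_measure_P μ hplane _ (measurable_P _ i) (hnorm c) i).comp
        (continuous_subtype_val.continuousAt)
    have hev := htend.eventually_lt_const hε
    rw [Metric.eventually_nhds_iff] at hev
    obtain ⟨δ, hδ, hδ'⟩ := hev
    exact ⟨δ, hδ, fun c' h => hδ' (by rwa [dist_comm])⟩
  · -- continuity of the inverse
    intro c ε hε
    have hcs : CompactSpace ↥S1 := isCompact_iff_compactSpace.1 (isCompact_sphere 0 1)
    set G : ↥S1 → ℝ := fun c' => ∑ i, (μ (symmDiff (P (c : EuclideanSpace ℝ (Fin (d+1))) i)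
      (P (c' : EuclideanSpace ℝ (Fin (d+1))) i))).toReal with hG_def
    have hGcont : Continuous G := by
      rw [continuous_iff_continuousAt]
      intro c₀
      apply tendsto_finset_sum
      intro i _
      exact (tendsto_measure_P μ hplane _ (measurable_P _ i) (hnorm c₀) i).comp
        (continuous_subtype_val.continuousAt)
    set K : Set ↥S1 := {c' | ε ≤ dist c c'} with hK_def
    have hKclosed : IsClosed K :=
      isClosed_le continuous_const (continuous_const.dist continuous_id)
    have hKcpt : IsCompact K := hKclosed.isCompact
    rcases K.eq_empty_or_nonempty with hKe | hKne
    · refine ⟨1, one_pos, fun c' _ => ?_⟩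
      by_contra h
      rw [not_lt] at h
      have : c' ∈ K := h
      rw [hKe] at this
      exact this
    · obtain ⟨cm, hcmK, hmin⟩ := hKcpt.exists_isMinOn hKne hGcont.continuousOn
      have hcmne : (c : EuclideanSpace ℝ (Fin (d+1))) ≠ (cm : EuclideanSpace ℝ (Fin (d+1))) := by
        intro h
        have : c = cm := Subtype.ext h
        have hdist : ε ≤ dist c cm := hcmK
        rw [this] at hdist
        simp at hdist
        linarith
      have hδpos : 0 < G cm := sum_symmDiff_pos μ hpos (hnorm c) (hnorm cm) hcmne
      refine ⟨G cm, hδpos, fun c' hc' => ?_⟩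
      by_contra h
      rw [not_lt] at h
      have : c' ∈ K := h
      have := hmin this
      exact absurd hc' (not_lt.2 this)
  · -- the two special points
    refine ⟨C1 d, C2 d, C1_ne_C2, ?_, homotopyEquiv_aux d⟩
    intro c
    constructor
    · rintro ⟨hne, -⟩
      have ht : tail (c : EuclideanSpace ℝ (Fin (d+1))) ≠ 0 :=
        (nonempty_P_iff (hnorm c)).1 hne
      obtain ⟨h1, h2⟩ := ne_C_of_tail_ne c.2 ht
      exact ⟨h1, h2⟩
    · rintro ⟨h1, h2⟩
      refine ⟨(nonempty_P_iff (hnorm c)).2 (tail_ne_of_ne_C h1 h2), ?_⟩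
      exact ⟨isOpen_P _, convex_P _, disjoint_P _, union_closure_P (hnorm c)⟩
end
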